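/- Suppose that for a finite set E of n points in ℝ² and every pair of nonzero reals the number of hinges is at most H·n², and for every nonzero real the number of dot-product pairs is at most S·n^{4/3}. Then for every k ≥ 1 with k ≡ 1 (mod 3) and every k-tuple of nonzero reals (α₁,…,α_k), the number of k-chains of that type in E is at most H^{(k-1)/3}·S·n^{2(k+1)/3}. -/

import Mathlib

/-- The standard dot product on ℝ². -/
def dot (A B : ℝ × ℝ) : ℝ := A.1 * B.1 + A.2 * B.2

/-- The set of k-chains of type τ in E: tuples of k+1 points of E whose consecutive
dot products are prescribed by τ. -/
def chains (E : Finset (ℝ × ℝ)) {k : ℕ} (τ : Fin k → ℝ) : Set (Fin (k + 1) → ℝ × ℝ) :=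
  {R | (∀ i, R i ∈ E) ∧ ∀ j : Fin k, dot (R j.castSucc) (R j.succ) = τ j}

lemma my_ncard_prod {α β : Type*} (s : Set α) (t : Set β) :
    (s ×ˢ t).ncard = s.ncard * t.ncard := by
  rw [← Nat.card_coe_set_eq, ← Nat.card_coe_set_eq, ← Nat.card_coe_set_eq,
    Nat.card_congr (Equiv.Set.prod s t), Nat.card_prod]

lemma chains_finite (E : Finset (ℝ × ℝ)) {k : ℕ} (τ : Fin k → ℝ) : (chains E τ).Finite := by
  apply Set.Finite.subset (Set.Finite.pi (fun _ : Fin (k+1) => E.finite_toSet))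
  intro R hR
  simp only [Set.mem_pi, Set.mem_univ, forall_true_left]
  exact fun i => hR.1 i

lemma chains_empty {k : ℕ} (τ : Fin k → ℝ) : chains ∅ τ = ∅ := by
  ext R
  simp only [chains, Set.mem_setOf_eq, Set.mem_empty_iff_false, iff_false, not_and]
  intro h
  exact absurd (h 0) (by simp)

lemma aux_bound (E : Finset (ℝ × ℝ)) (H S : ℝ)
    (hH : ∀ α₁ α₂ : ℝ, α₁ ≠ 0 → α₂ ≠ 0 →
      ({t : (ℝ × ℝ) × (ℝ × ℝ) × (ℝ × ℝ) | t.1 ∈ E ∧ t.2.1 ∈ E ∧ t.2.2 ∈ E ∧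
        dot t.1 t.2.1 = α₁ ∧ dot t.2.1 t.2.2 = α₂}.ncard : ℝ) ≤ H * (E.card : ℝ) ^ 2)
    (hS : ∀ α : ℝ, α ≠ 0 →
      ({p : (ℝ × ℝ) × (ℝ × ℝ) | p.1 ∈ E ∧ p.2 ∈ E ∧ dot p.1 p.2 = α}.ncard : ℝ) ≤
        S * (E.card : ℝ) ^ ((4:ℝ)/3)) :
    ∀ m k, k = 3 * m + 1 → ∀ α : Fin k → ℝ, (∀ j, α j ≠ 0) →
      ((chains E α).ncard : ℝ) ≤ H ^ m * S * (E.card : ℝ) ^ ((2 * (k + 1) : ℝ) / 3) := by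
  intro m
  induction m with
  | zero =>
    intro k hk α hα
    subst hk
    -- k = 1
    set P : Set ((ℝ × ℝ) × (ℝ × ℝ)) :=
      {p | p.1 ∈ E ∧ p.2 ∈ E ∧ dot p.1 p.2 = α 0} with hP
    have hmap : (fun R : Fin 2 → ℝ × ℝ => (R 0, R 1)) '' chains E α ⊆ P := by
      rintro p ⟨R, hR, rfl⟩
      have h0 := hR.2 0
      have e1 : (Fin.castSucc (0 : Fin 1)) = (0 : Fin 2) := rfl
      have e2 : (Fin.succ (0 : Fin 1)) = (1 : Fin 2) := rfl
      rw [e1, e2] at h0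
      exact ⟨hR.1 0, hR.1 1, h0⟩
    have hinj : Set.InjOn (fun R : Fin 2 → ℝ × ℝ => (R 0, R 1)) (chains E α) := by
      intro R hR R' hR' h
      funext i
      fin_cases i
      · exact congrArg Prod.fst h
      · exact congrArg Prod.snd h
    have hPfin : P.Finite := by
      apply Set.Finite.subset (E.finite_toSet.prod E.finite_toSet)
      rintro ⟨a, b⟩ ⟨ha, hb, -⟩
      exact ⟨ha, hb⟩
    have hcard : (chains E α).ncard ≤ P.ncard := by
      rw [← Set.ncard_image_of_injOn hinj]
      exact Set.ncard_le_ncard hmap hPfin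
    calc ((chains E α).ncard : ℝ) ≤ (P.ncard : ℝ) := by exact_mod_cast hcard
      _ ≤ S * (E.card : ℝ) ^ ((4:ℝ)/3) := hS (α 0) (hα 0)
      _ = H ^ 0 * S * (E.card : ℝ) ^ ((2 * (↑(3 * 0 + 1 : ℕ) + 1) : ℝ) / 3) := by
          norm_num
  | succ m ih =>
    intro k hk α hα
    obtain ⟨k', rfl, hk'⟩ : ∃ k', k = k' + 3 ∧ k' = 3 * m + 1 := ⟨3 * m + 1, by omega, rfl⟩
    by_cases hE : E = ∅
    · subst hE
      rw [chains_empty]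
      have : ((∅ : Finset (ℝ × ℝ)).card : ℝ) = 0 := by simp
      rw [this, Real.zero_rpow (by positivity)]
      simp
    have hn : (0 : ℝ) < E.card := by
      have := Finset.card_pos.mpr (Finset.nonempty_iff_ne_empty.mpr hE)
      exact_mod_cast this
    -- hinge set and tail chain set
    set Hs : Set ((ℝ × ℝ) × (ℝ × ℝ) × (ℝ × ℝ)) :=
      {t | t.1 ∈ E ∧ t.2.1 ∈ E ∧ t.2.2 ∈ E ∧
        dot t.1 t.2.1 = α 0 ∧ dot t.2.1 t.2.2 = α 1} with hHs
    set β : Fin k' → ℝ := fun j => α (j.addNat 3) with hβ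
    set f : (Fin (k' + 3 + 1) → ℝ × ℝ) → ((ℝ × ℝ) × (ℝ × ℝ) × (ℝ × ℝ)) × (Fin (k' + 1) → ℝ × ℝ) :=
      fun R => ((R 0, R 1, R 2), fun i => R (i.addNat 3)) with hf
    have hmap : f '' chains E α ⊆ Hs ×ˢ chains E β := by
      rintro p ⟨R, hR, rfl⟩
      constructor
      · have h0 := hR.2 0
        have h1 := hR.2 1
        have e0c : (Fin.castSucc (0 : Fin (k' + 3))) = (0 : Fin (k' + 3 + 1)) := rfl
        have e0s : (Fin.succ (0 : Fin (k' + 3))) = (1 : Fin (k' + 3 + 1)) := by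
          ext; simp
        have e1c : (Fin.castSucc (1 : Fin (k' + 3))) = (1 : Fin (k' + 3 + 1)) := by
          ext; simp [Fin.val_one]
        have e1s : (Fin.succ (1 : Fin (k' + 3))) = (2 : Fin (k' + 3 + 1)) := by
          ext; simp [Fin.val_one, Fin.val_two]
        rw [e0c, e0s] at h0
        rw [e1c, e1s] at h1
        exact ⟨hR.1 0, hR.1 1, hR.1 2, h0, h1⟩
      · refine ⟨fun i => hR.1 _, fun j => ?_⟩
        have ec : (Fin.castSucc j).addNat 3 = Fin.castSucc (j.addNat 3) := by
          ext; simp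
        have es : (Fin.succ j).addNat 3 = Fin.succ (j.addNat 3) := by
          ext; simp
        have := hR.2 (j.addNat 3)
        simp only [hf]
        rw [ec, es]
        exact this
    have hinj : Set.InjOn f (chains E α) := by
      intro R hR R' hR' h
      have h1 : R 0 = R' 0 := congrArg (fun x => x.1.1) h
      have h2 : R 1 = R' 1 := congrArg (fun x => x.1.2.1) h
      have h3 : R 2 = R' 2 := congrArg (fun x => x.1.2.2) h
      have h4 : ∀ i : Fin (k' + 1), R (i.addNat 3) = R' (i.addNat 3) :=
        fun i => congrFun (congrArg (fun x => x.2) h) i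
      funext i
      rcases lt_or_ge i.val 3 with hi | hi
      · interval_cases hv : i.val
        · have : i = 0 := by ext; simp [hv]
          rw [this]; exact h1
        · have : i = 1 := by ext; simpa [Fin.val_one] using hv
          rw [this]; exact h2
        · have : i = 2 := by ext; simpa [Fin.val_two, Nat.mod_eq_of_lt (show 2 < k' + 3 + 1 by omega)] using hv
          rw [this]; exact h3
      · have hi' := i.isLt
        set j : Fin (k' + 1) := ⟨i.val - 3, by omega⟩ with hj
        have : j.addNat 3 = i := by ext; simp [hj]; omega
        rw [← this]; exact h4 j
    have hHsfin : Hs.Finite := by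
      apply Set.Finite.subset (E.finite_toSet.prod (E.finite_toSet.prod E.finite_toSet))
      rintro ⟨a, b, c⟩ ⟨ha, hb, hc, -⟩
      exact ⟨ha, hb, hc⟩
    have hprodfin : (Hs ×ˢ chains E β).Finite := hHsfin.prod (chains_finite E β)
    have hcard : (chains E α).ncard ≤ Hs.ncard * (chains E β).ncard := by
      rw [← my_ncard_prod, ← Set.ncard_image_of_injOn hinj]
      exact Set.ncard_le_ncard hmap hprodfin
    have hHb : (Hs.ncard : ℝ) ≤ H * (E.card : ℝ) ^ 2 := hH (α 0) (α 1) (hα 0) (hα 1)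
    have hCb : ((chains E β).ncard : ℝ) ≤
        H ^ m * S * (E.card : ℝ) ^ ((2 * (↑k' + 1) : ℝ) / 3) :=
      ih k' hk' β (fun j => hα _)
    have hrw : (E.card : ℝ) ^ ((2 * (↑(k' + 3 : ℕ) + 1) : ℝ) / 3) =
        (E.card : ℝ) ^ (2 : ℕ) * (E.card : ℝ) ^ ((2 * (↑k' + 1) : ℝ) / 3) := by
      rw [← Real.rpow_natCast (E.card : ℝ) 2, ← Real.rpow_add hn]
      congr 1
      push_cast
      ring
    calc ((chains E α).ncard : ℝ)
        ≤ (Hs.ncard : ℝ) * ((chains E β).ncard : ℝ) := by exact_mod_cast hcard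
      _ ≤ (H * (E.card : ℝ) ^ 2) * (H ^ m * S * (E.card : ℝ) ^ ((2 * (↑k' + 1) : ℝ) / 3)) := by
          apply mul_le_mul hHb hCb (Nat.cast_nonneg _)
          exact le_trans (Nat.cast_nonneg _) hHb
      _ = H ^ (m + 1) * S * (E.card : ℝ) ^ ((2 * (↑(k' + 3 : ℕ) + 1) : ℝ) / 3) := by
          rw [hrw]; ring

theorem chains_bound_one_mod_three (E : Finset (ℝ × ℝ)) (H S : ℝ)
    (hH : ∀ α₁ α₂ : ℝ, α₁ ≠ 0 → α₂ ≠ 0 →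
      ({t : (ℝ × ℝ) × (ℝ × ℝ) × (ℝ × ℝ) | t.1 ∈ E ∧ t.2.1 ∈ E ∧ t.2.2 ∈ E ∧
        dot t.1 t.2.1 = α₁ ∧ dot t.2.1 t.2.2 = α₂}.ncard : ℝ) ≤ H * (E.card : ℝ) ^ 2)
    (hS : ∀ α : ℝ, α ≠ 0 →
      ({p : (ℝ × ℝ) × (ℝ × ℝ) | p.1 ∈ E ∧ p.2 ∈ E ∧ dot p.1 p.2 = α}.ncard : ℝ) ≤
        S * (E.card : ℝ) ^ ((4:ℝ)/3))
    (k : ℕ) (hk : 1 ≤ k) (hk3 : k % 3 = 1) (α : Fin k → ℝ) (hα : ∀ j, α j ≠ 0) :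
    ((chains E α).ncard : ℝ) ≤ H ^ ((k - 1) / 3) * S * (E.card : ℝ) ^ ((2 * (k + 1) : ℝ) / 3) := by
  obtain ⟨m, rfl⟩ : ∃ m, k = 3 * m + 1 := ⟨k / 3, by omega⟩
  have hm : (3 * m + 1 - 1) / 3 = m := by omega
  rw [hm]
  exact aux_bound E H S hH hS m (3 * m + 1) rfl α hα
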